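/- For every v > 0 and every k ∈ {1,…,K}, the mean-matching identity Nₖ(v)/(v²A(v)) = f(v) · cₖ(v) holds. Consequently, for all real ȳ₀₁, …, ȳ₀K (with Yₖ = n₀ₖȳ₀ₖ/σ₀ₖ²), Σₖ Nₖ(v)Yₖ/(v²A(v)) = f(v) Σₖ cₖ(v)Yₖ, so that (combined with the variance matching) the conditional posterior mean of θ given v in the Bayesian hierarchical model equals the conditional posterior mean of θ given a₀ = f(v) under the BHM-matching normalized power prior. -/

import Mathlib

open Real

/-- the mean-matching identity `Nₖ(v)/(v²A(v)) = f(v)·cₖ(v)`, and its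
consequence for the weighted sums appearing in the conditional posterior means of `θ`
under the BHM and the BHM-matching normalized power prior. -/
theorem stmt_16 (K : ℕ) (hK : 1 ≤ K)
    (σ02 n0 : Fin K → ℝ)
    (hσ02 : ∀ k, 0 < σ02 k) (hn0 : ∀ k, 0 < n0 k)
    (N : ℝ → Fin K → ℝ)
    (hN : ∀ v > (0 : ℝ), ∀ k, N v k = (n0 k / σ02 k + 1 / v)⁻¹)
    (c : ℝ → Fin K → ℝ)
    (hc : ∀ v > (0 : ℝ), ∀ k, c v k = (1 + n0 k * v / σ02 k)⁻¹)
    (f : ℝ → ℝ)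
    (hf : ∀ v > (0 : ℝ), f v = (1 + ∑ k, (n0 k / σ02 k) * N v k)⁻¹)
    (A : ℝ → ℝ)
    (hA : ∀ v > (0 : ℝ), A v = (1 + K) / v - (∑ k, N v k) / v ^ 2) :
    ∀ v > (0 : ℝ),
      (∀ k, N v k / (v ^ 2 * A v) = f v * c v k) ∧
      ∀ ybar0 : Fin K → ℝ,
        (∑ k, N v k * (n0 k * ybar0 k / σ02 k)) / (v ^ 2 * A v) =
          f v * ∑ k, c v k * (n0 k * ybar0 k / σ02 k) := by
  intro v hv
  have hv' : v ≠ 0 := ne_of_gt hv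
  have hd : ∀ k, (0:ℝ) < n0 k * v + σ02 k := fun k => by
    have := hσ02 k; have := hn0 k; positivity
  have hNv : ∀ k, N v k = v * σ02 k / (n0 k * v + σ02 k) := by
    intro k
    rw [hN v hv k]
    have hσ := hσ02 k
    have hn := hn0 k
    have hdk := (hd k).ne'
    rw [eq_div_iff hdk, inv_mul_eq_div, div_eq_iff]
    · field_simp
    · positivity
  have hcv : ∀ k, c v k = σ02 k / (n0 k * v + σ02 k) := by
    intro k
    rw [hc v hv k]
    have hσ := hσ02 k
    have hn := hn0 k
    have hdk := (hd k).ne'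
    rw [eq_div_iff hdk, inv_mul_eq_div, div_eq_iff]
    · field_simp
      ring
    · positivity
  have hNc : ∀ k, N v k = v * c v k := by
    intro k; rw [hNv k, hcv k, mul_div_assoc]
  -- the key sum
  set S : ℝ := ∑ k, (n0 k / σ02 k) * N v k with hS
  have hSnn : 0 ≤ S := by
    apply Finset.sum_nonneg
    intro k _
    have hσ := hσ02 k
    have hn := hn0 k
    have h1 : 0 ≤ n0 k / σ02 k := le_of_lt (by positivity)
    have h2 : 0 ≤ N v k := by
      rw [hNv k]; positivity
    exact mul_nonneg h1 h2
  have h1S : (0:ℝ) < 1 + S := by linarith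
  have hterm : ∀ k, v - N v k = v * ((n0 k / σ02 k) * N v k) := by
    intro k
    rw [hNv k]
    have hσ := (hσ02 k).ne'
    have hdk := (hd k).ne'
    have hdk' : σ02 k + v * n0 k ≠ 0 := by rw [add_comm, mul_comm]; exact hdk
    field_simp
    rw [eq_div_iff (by rw [mul_comm]; exact hdk), sub_mul, div_mul_cancel₀ _ (by rw [mul_comm]; exact hdk)]
    ring
  have hAv : v ^ 2 * A v = v * (1 + S) := by
    rw [hA v hv]
    have h1 : v ^ 2 * ((1 + ↑K) / v - (∑ k, N v k) / v ^ 2)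
        = v * (1 + ↑K) - ∑ k, N v k := by
      field_simp
    rw [h1]
    have h2 : v * (1 + (K:ℝ)) - ∑ k, N v k = v + ∑ k, (v - N v k) := by
      rw [Finset.sum_sub_distrib, Finset.sum_const, Finset.card_fin]
      push_cast
      ring
    rw [h2]
    have h3 : ∑ k, (v - N v k) = ∑ k, v * ((n0 k / σ02 k) * N v k) :=
      Finset.sum_congr rfl fun k _ => hterm k
    rw [h3, ← Finset.mul_sum, ← hS]
    ring
  have hfv : f v = (1 + S)⁻¹ := by rw [hf v hv]
  have hmain : ∀ k, N v k / (v ^ 2 * A v) = f v * c v k := by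
    intro k
    rw [hAv, hNc k, hfv]
    rw [mul_div_mul_left _ _ hv', div_eq_inv_mul]
  refine ⟨hmain, ?_⟩
  intro ybar0
  rw [Finset.sum_div, Finset.mul_sum]
  apply Finset.sum_congr rfl
  intro k _
  rw [mul_comm (N v k), mul_div_assoc, hmain k]
  ring
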